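/- Let g, g' : ℝ² → [0,∞) be continuous, compactly supported, and not identically zero, and fix θ ∈ ℝ. Then the ratio N_{g,g'}(θ − τ̄) / N_{g,g'}(θ) tends to 0 as τ̄ → ∞; equivalently, N_{g,g'}(θ̄) → 0 as θ̄ → −∞. -/

import Mathlib

open MeasureTheory Set ENNReal

noncomputable section

abbrev Plane := EuclideanSpace ℝ (Fin 2)

/-- The 2d heat kernel `p(t,x) = (2πt)⁻¹ exp(−|x|²/(2t))`. -/
def heatK (t : ℝ) (x : Plane) : ℝ :=
  (2 * Real.pi * t)⁻¹ * Real.exp (-‖x‖ ^ 2 / (2 * t))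

/-- `j^{θ̄}(t) = e^{θ̄ t} ∫₀^∞ u^{t−1}/Γ(u) du`. -/
def jfn (θ : ℝ) (t : ℝ) : ℝ :=
  Real.exp (θ * t) * ∫ u in Ioi (0 : ℝ), u ^ (t - 1) / Real.Gamma u

/-- The kernel `W^{θ̄}(t,(x₁,x₂),(x₁',x₂'))`, defined as a fourfold iterated integral with
values in `[0,∞]`. Here `u'' = t − u − u'`. -/
def Wker (θ t : ℝ) (x₁ x₂ x₁' x₂' : Plane) : ℝ≥0∞ :=
  ∫⁻ u in Ioo (0 : ℝ) t, ∫⁻ u' in Ioo (0 : ℝ) (t - u), ∫⁻ y : Plane, ∫⁻ y' : Plane,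
    ENNReal.ofReal (heatK u (x₁ - y) * heatK u (x₂ - y) *
      (4 * Real.pi * jfn θ u' * heatK (u' / 2) (y - y')) *
      (heatK (t - u - u') (y' - x₁') * heatK (t - u - u') (y' - x₂')))

/-- The pairing `N_{g,g'}(θ̄) = ∫ g(x₁)g(x₂) W^{θ̄}(1,(x₁,x₂),(x₁',x₂')) g'(x₁')g'(x₂') dx`. -/
def Npair (g g' : Plane → ℝ) (θ : ℝ) : ℝ≥0∞ :=
  ∫⁻ x₁ : Plane, ∫⁻ x₂ : Plane, ∫⁻ x₁' : Plane, ∫⁻ x₂' : Plane,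
    ENNReal.ofReal (g x₁ * g x₂) * Wker θ 1 x₁ x₂ x₁' x₂' *
      ENNReal.ofReal (g' x₁' * g' x₂')

/-! ### Auxiliary development -/

section Aux

open Function

/-! #### Heat kernel basics -/

lemma heatK_nonneg {t : ℝ} (ht : 0 ≤ t) (x : Plane) : 0 ≤ heatK t x := by
  unfold heatK; positivity

lemma heatK_sub_comm (t : ℝ) (x y : Plane) : heatK t (x - y) = heatK t (y - x) := by
  unfold heatK; rw [norm_sub_rev]

lemma gauss_integrable {b : ℝ} (hb : 0 < b) :
    Integrable (fun v : Plane => Real.exp (-b * ‖v‖^2)) := by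
  by_contra h
  have := GaussianFourier.integral_rexp_neg_mul_sq_norm (V := Plane) hb
  rw [integral_undef h] at this
  have h2 : (0:ℝ) < (Real.pi / b) ^ ((Module.finrank ℝ Plane : ℝ) / 2) := by positivity
  rw [← this] at h2
  exact lt_irrefl 0 h2

lemma lintegral_heatK (t : ℝ) (c : Plane) :
    ∫⁻ x : Plane, ENNReal.ofReal (heatK t (x - c)) = if 0 < t then 1 else 0 := by
  rw [lintegral_sub_right_eq_self (fun x => ENNReal.ofReal (heatK t x)) c]
  rcases lt_or_ge 0 t with ht | ht
  · rw [if_pos ht]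
    have hb : 0 < (2*t)⁻¹ := by positivity
    have harg : ∀ x : Plane, heatK t x = (2 * Real.pi * t)⁻¹ * Real.exp (-(2*t)⁻¹ * ‖x‖^2) := by
      intro x; unfold heatK; ring_nf
    simp only [harg]
    rw [← ofReal_integral_eq_lintegral_ofReal
        (((gauss_integrable hb).const_mul _))
        (Filter.Eventually.of_forall fun x => by positivity)]
    rw [integral_const_mul, GaussianFourier.integral_rexp_neg_mul_sq_norm hb]
    have h2 : (Module.finrank ℝ Plane : ℝ) = 2 := by norm_num
    rw [h2, show ((2:ℝ)/2) = (1:ℝ) by norm_num, Real.rpow_one,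
      show Real.pi / (2*t)⁻¹ = 2 * Real.pi * t by field_simp,
      inv_mul_cancel₀ (by positivity), ENNReal.ofReal_one]
  · rw [if_neg (not_lt.mpr ht)]
    have : ∀ x : Plane, ENNReal.ofReal (heatK t x) = 0 := by
      intro x
      apply ENNReal.ofReal_eq_zero.mpr
      unfold heatK
      apply mul_nonpos_of_nonpos_of_nonneg ?_ (Real.exp_nonneg _)
      exact inv_nonpos.mpr (mul_nonpos_of_nonneg_of_nonpos (by positivity) ht)
    simp [this]

lemma lintegral_heatK' {t : ℝ} (ht : 0 < t) (c : Plane) :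
    ∫⁻ x : Plane, ENNReal.ofReal (heatK t (x - c)) = 1 := by
  rw [lintegral_heatK, if_pos ht]

lemma lintegral_heatK'' {t : ℝ} (ht : 0 < t) (c : Plane) :
    ∫⁻ x : Plane, ENNReal.ofReal (heatK t (c - x)) = 1 := by
  rw [show (fun x : Plane => ENNReal.ofReal (heatK t (c - x)))
      = fun x => ENNReal.ofReal (heatK t (x - c)) from funext fun x => by
        rw [heatK_sub_comm]]
  exact lintegral_heatK' ht c

/-! #### Bounds on `jfn` -/

def hbd (u : ℝ) : ℝ := Real.exp 2 * Real.exp (-(Real.log 2) * (u - 1))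

def Cj : ℝ := ∫ u in Ioi (0:ℝ), hbd u

lemma hbd_eq (u : ℝ) :
    hbd u = (Real.exp 2 * Real.exp (Real.log 2)) * Real.exp (-(Real.log 2) * u) := by
  unfold hbd
  simp only [← Real.exp_add]
  congr 1
  ring

lemma hbd_integrable : IntegrableOn hbd (Ioi (0:ℝ)) := by
  have : IntegrableOn (fun u : ℝ => Real.exp (-(Real.log 2) * u)) (Ioi (0:ℝ)) :=
    exp_neg_integrableOn_Ioi 0 (Real.log_pos (by norm_num))
  rw [show hbd = fun u => (Real.exp 2 * Real.exp (Real.log 2)) * Real.exp (-(Real.log 2) * u)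
    from funext hbd_eq]
  exact this.const_mul _

lemma Cj_nonneg : 0 ≤ Cj := by
  apply setIntegral_nonneg measurableSet_Ioi
  intro u _
  unfold hbd
  positivity

lemma Gamma_ge {x a : ℝ} (hx : 1 ≤ x) (ha : 0 < a) :
    Real.exp (-a) * a ^ (x - 1) ≤ Real.Gamma x := by
  have hx0 : 0 < x := by linarith
  rw [Real.Gamma_eq_integral hx0]
  have hexpint : IntegrableOn (fun s : ℝ => Real.exp (-s)) (Ioi a) := by
    have := exp_neg_integrableOn_Ioi a (zero_lt_one)
    exact this.congr_fun (fun s _ => by beta_reduce; rw [neg_one_mul]) measurableSet_Ioi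
  have h1 : ∫ s in Ioi a, Real.exp (-s) * a ^ (x-1) ≤ ∫ s in Ioi a, Real.exp (-s) * s ^ (x - 1) := by
    apply setIntegral_mono_on
    · exact hexpint.mul_const _
    · exact (Real.GammaIntegral_convergent hx0).mono_set (Ioi_subset_Ioi ha.le)
    · exact measurableSet_Ioi
    · intro s hs
      exact mul_le_mul_of_nonneg_left
        (Real.rpow_le_rpow ha.le (le_of_lt hs) (by linarith)) (Real.exp_nonneg _)
  have h2 : ∫ s in Ioi a, Real.exp (-s) * s ^ (x-1) ≤ ∫ s in Ioi 0, Real.exp (-s) * s ^ (x - 1) := by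
    apply setIntegral_mono_set (Real.GammaIntegral_convergent hx0)
    · filter_upwards [self_mem_ae_restrict (measurableSet_Ioi : MeasurableSet (Ioi (0:ℝ)))] with s hs
      have hs0 : (0:ℝ) < s := hs
      positivity
    · exact HasSubset.Subset.eventuallyLE (Ioi_subset_Ioi ha.le)
  calc Real.exp (-a) * a ^ (x-1) = ∫ s in Ioi a, Real.exp (-s) * a ^ (x-1) := by
        rw [integral_mul_const, integral_exp_neg_Ioi]
    _ ≤ _ := le_trans h1 h2

lemma I_le_Cj {t : ℝ} (ht : 0 < t) (ht1 : t ≤ 1) :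
    (∫ u in Ioi (0:ℝ), u ^ (t - 1) / Real.Gamma u) ≤ Cj := by
  have hl2 : 0 < Real.log 2 := Real.log_pos (by norm_num)
  apply integral_mono_of_nonneg
  · filter_upwards [self_mem_ae_restrict (measurableSet_Ioi : MeasurableSet (Ioi (0:ℝ)))] with u hu
    have hu0 : (0:ℝ) < u := hu
    have h := Real.Gamma_pos_of_pos hu0
    positivity
  · exact hbd_integrable
  · filter_upwards [self_mem_ae_restrict (measurableSet_Ioi : MeasurableSet (Ioi (0:ℝ)))] with u hu
    have hu0 : (0:ℝ) < u := hu
    unfold hbd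
    rcases le_or_gt u 1 with h1 | h1
    · have hΓ : Real.Gamma (u+1) = u * Real.Gamma u := Real.Gamma_add_one (ne_of_gt hu0)
      have hΓpos : 0 < Real.Gamma u := Real.Gamma_pos_of_pos hu0
      have key : u ^ (t-1) / Real.Gamma u = u ^ t / Real.Gamma (u+1) := by
        rw [hΓ, show u ^ t = u ^ (t-1) * u by rw [← Real.rpow_add_one (ne_of_gt hu0)]; ring_nf]
        field_simp
      rw [key]
      have hΓ1 : Real.exp (-1) ≤ Real.Gamma (u+1) := by
        have := Gamma_ge (x := u+1) (a := 1) (by linarith) one_pos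
        simpa using this
      have hnum : u ^ t ≤ 1 := Real.rpow_le_one hu0.le h1 ht.le
      calc u ^ t / Real.Gamma (u+1) ≤ 1 / Real.exp (-1) :=
            div_le_div₀ zero_le_one hnum (Real.exp_pos _) hΓ1
        _ = Real.exp 1 := by rw [one_div, ← Real.exp_neg, neg_neg]
        _ ≤ Real.exp 2 * Real.exp (-(Real.log 2) * (u - 1)) := by
            rw [← Real.exp_add]
            apply Real.exp_le_exp.mpr
            nlinarith
    · have hΓ : Real.exp (-2) * 2 ^ (u - 1) ≤ Real.Gamma u := Gamma_ge h1.le two_pos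
      have hnum : u ^ (t-1) ≤ 1 := Real.rpow_le_one_of_one_le_of_nonpos h1.le (by linarith)
      have hpos : (0:ℝ) < Real.exp (-2) * 2 ^ (u-1) := by positivity
      calc u ^ (t-1) / Real.Gamma u ≤ 1 / (Real.exp (-2) * 2 ^ (u-1)) :=
            div_le_div₀ zero_le_one hnum hpos hΓ
        _ = Real.exp 2 * Real.exp (-(Real.log 2) * (u - 1)) := by
            rw [Real.rpow_def_of_pos two_pos, ← Real.exp_add, one_div, ← Real.exp_neg,
              ← Real.exp_add]
            congr 1
            ring

lemma jfn_nonneg (θ t : ℝ) : 0 ≤ jfn θ t := by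
  unfold jfn
  apply mul_nonneg (Real.exp_nonneg _)
  apply setIntegral_nonneg measurableSet_Ioi
  intro u hu
  have hu0 : (0:ℝ) < u := hu
  have h := Real.Gamma_pos_of_pos hu0
  positivity

lemma jfn_le {θ t : ℝ} (ht : 0 < t) (ht1 : t ≤ 1) : jfn θ t ≤ Cj * Real.exp (θ * t) := by
  unfold jfn
  rw [mul_comm Cj _]
  exact mul_le_mul_of_nonneg_left (I_le_Cj ht ht1) (Real.exp_nonneg _)

/-! #### The exponential integral bound -/

lemma lint_exp_le {θ : ℝ} (hθ : θ < 0) :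
    ∫⁻ u in Ioo (0:ℝ) 1, ENNReal.ofReal (Real.exp (θ * u)) ≤ ENNReal.ofReal (-θ)⁻¹ := by
  have hb : 0 < -θ := by linarith
  have hint : IntegrableOn (fun u : ℝ => Real.exp (θ * u)) (Ioi 0) := by
    have := exp_neg_integrableOn_Ioi 0 hb
    exact this.congr_fun (fun s _ => by ring_nf) measurableSet_Ioi
  calc ∫⁻ u in Ioo (0:ℝ) 1, ENNReal.ofReal (Real.exp (θ * u))
      ≤ ∫⁻ u in Ioi (0:ℝ), ENNReal.ofReal (Real.exp (θ * u)) :=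
        lintegral_mono_set Ioo_subset_Ioi_self
    _ = ENNReal.ofReal (∫ u in Ioi (0:ℝ), Real.exp (θ * u)) :=
        (ofReal_integral_eq_lintegral_ofReal hint
          (Filter.Eventually.of_forall fun x => Real.exp_nonneg _)).symm
    _ ≤ ENNReal.ofReal (-θ)⁻¹ := by
        apply ENNReal.ofReal_le_ofReal
        have : ∫ u in Ioi (0:ℝ), Real.exp (θ * u)
            = (-θ)⁻¹ • ∫ x in Ioi ((-θ) * 0), Real.exp (-x) := by
          rw [← integral_comp_mul_left_Ioi (fun x => Real.exp (-x)) 0 hb]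
          congr 1 with u
          ring_nf
        rw [this, mul_zero, integral_exp_neg_Ioi, smul_eq_mul, neg_zero, Real.exp_zero, mul_one]

/-! #### The 7-slot product space -/

abbrev Ω7 := Fin 7 → Plane

@[fun_prop]
lemma measurable_heatK_comp {α : Type*} [MeasurableSpace α] {f : α → ℝ} {h : α → Plane}
    (hf : Measurable f) (hh : Measurable h) : Measurable fun a => heatK (f a) (h a) := by
  unfold heatK
  fun_prop

def uco (ω : Ω7) : ℝ := ω 4 0
def vco (ω : Ω7) : ℝ := ω 4 1

@[fun_prop]
lemma measurable_uco : Measurable uco :=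
  ((EuclideanSpace.proj (0 : Fin 2)).continuous.measurable).comp (measurable_pi_apply 4)

@[fun_prop]
lemma measurable_vco : Measurable vco :=
  ((EuclideanSpace.proj (1 : Fin 2)).continuous.measurable).comp (measurable_pi_apply 4)

/-- The pair `(u, u')` as a point of the plane. -/
def mk2 (a b : ℝ) : Plane := (MeasurableEquiv.toLp 2 (Fin 2 → ℝ)) ![a, b]

lemma mk2_zero (a b : ℝ) : (mk2 a b) 0 = a := rfl
lemma mk2_one (a b : ℝ) : (mk2 a b) 1 = b := rfl

lemma lintegral_plane_split (φ : Plane → ℝ≥0∞) (hφ : Measurable φ) :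
    ∫⁻ z : Plane, φ z = ∫⁻ a : ℝ, ∫⁻ b : ℝ, φ (mk2 a b) := by
  have e1 := (EuclideanSpace.volume_preserving_symm_measurableEquiv_toLp (Fin 2)).symm
  have e2 := (volume_preserving_finTwoArrow ℝ).symm
  have h1 : ∫⁻ z : Plane, φ z
      = ∫⁻ v : Fin 2 → ℝ, φ ((MeasurableEquiv.toLp 2 (Fin 2 → ℝ)) v) := by
    exact (e1.lintegral_comp hφ).symm
  have hmeas2 : Measurable fun v : Fin 2 → ℝ =>
      φ ((MeasurableEquiv.toLp 2 (Fin 2 → ℝ)) v) :=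
    hφ.comp (MeasurableEquiv.measurable _)
  have h2 : ∫⁻ v : Fin 2 → ℝ, φ ((MeasurableEquiv.toLp 2 (Fin 2 → ℝ)) v)
      = ∫⁻ p : ℝ × ℝ, φ ((MeasurableEquiv.toLp 2 (Fin 2 → ℝ))
          ((MeasurableEquiv.finTwoArrow).symm p)) := by
    rw [e2.lintegral_comp hmeas2]
  rw [h1, h2, Measure.volume_eq_prod,
    lintegral_prod (fun p : ℝ × ℝ => φ ((MeasurableEquiv.toLp 2 (Fin 2 → ℝ))
        ((MeasurableEquiv.finTwoArrow).symm p)))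
      ((hmeas2.comp (MeasurableEquiv.measurable _)).aemeasurable)]
  rfl

/-! #### The bounding integrand and its marginals -/

variable (g : Plane → ℝ) (θ Mg Mg' : ℝ)

/-- indicator factor for `u ∈ (0,1)` -/
def ind1 (ω : Ω7) : ℝ≥0∞ := (Ioo (0:ℝ) 1).indicator (1 : ℝ → ℝ≥0∞) (uco ω)

/-- indicator factor for `u' ∈ (0,1-u)` -/
def ind2 (ω : Ω7) : ℝ≥0∞ := (Ioo (0:ℝ) (1 - uco ω)).indicator (1 : ℝ → ℝ≥0∞) (vco ω)

lemma ind1_ne_top (ω : Ω7) : ind1 ω ≠ ⊤ := by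
  unfold ind1
  by_cases h : uco ω ∈ Ioo (0:ℝ) 1 <;> simp [h]

lemma ind2_ne_top (ω : Ω7) : ind2 ω ≠ ⊤ := by
  unfold ind2
  by_cases h : vco ω ∈ Ioo (0:ℝ) (1 - uco ω) <;> simp [h]

lemma measurable_ind1 : Measurable (ind1) := by
  have : ind1 = {ω : Ω7 | 0 < uco ω ∧ uco ω < 1}.indicator (fun _ => (1:ℝ≥0∞)) := by
    funext ω
    unfold ind1
    by_cases h : uco ω ∈ Ioo (0:ℝ) 1
    · rw [indicator_of_mem h, indicator_of_mem (by exact h)]; rfl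
    · rw [indicator_of_notMem h, indicator_of_notMem (by exact h)]
  rw [this]
  exact measurable_const.indicator
    ((measurableSet_lt measurable_const measurable_uco).inter
     (measurableSet_lt measurable_uco measurable_const))

lemma measurable_ind2 : Measurable (ind2) := by
  have : ind2 = {ω : Ω7 | 0 < vco ω ∧ vco ω < 1 - uco ω}.indicator (fun _ => (1:ℝ≥0∞)) := by
    funext ω
    unfold ind2
    by_cases h : vco ω ∈ Ioo (0:ℝ) (1 - uco ω)
    · rw [indicator_of_mem h, indicator_of_mem (by exact h)]; rfl
    · rw [indicator_of_notMem h, indicator_of_notMem (by exact h)]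
  rw [this]
  exact measurable_const.indicator
    ((measurableSet_lt measurable_const measurable_vco).inter
     (measurableSet_lt measurable_vco (measurable_const.sub measurable_uco)))

/-- The dominating integrand on the 7-slot space. -/
def Fb (ω : Ω7) : ℝ≥0∞ :=
  ind1 ω * ind2 ω *
  ENNReal.ofReal ((g (ω 0) * Mg) *
    (heatK (uco ω) (ω 0 - ω 5) * heatK (uco ω) (ω 1 - ω 5) *
      (4 * Real.pi * (Cj * Real.exp (θ * vco ω)) * heatK (vco ω / 2) (ω 5 - ω 6)) *
      (heatK (1 - uco ω - vco ω) (ω 6 - ω 2) * heatK (1 - uco ω - vco ω) (ω 6 - ω 3))) *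
    (Mg' * Mg'))

def F6 (ω : Ω7) : ℝ≥0∞ :=
  ind1 ω * ind2 ω *
  ENNReal.ofReal ((g (ω 0) * Mg) *
    (heatK (uco ω) (ω 0 - ω 5) *
      (4 * Real.pi * (Cj * Real.exp (θ * vco ω)) * heatK (vco ω / 2) (ω 5 - ω 6)) *
      (heatK (1 - uco ω - vco ω) (ω 6 - ω 2) * heatK (1 - uco ω - vco ω) (ω 6 - ω 3))) *
    (Mg' * Mg'))

def F5 (ω : Ω7) : ℝ≥0∞ :=
  ind1 ω * ind2 ω *
  ENNReal.ofReal ((g (ω 0) * Mg) *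
    (heatK (uco ω) (ω 0 - ω 5) *
      (4 * Real.pi * (Cj * Real.exp (θ * vco ω)) * heatK (vco ω / 2) (ω 5 - ω 6)) *
      heatK (1 - uco ω - vco ω) (ω 6 - ω 2)) *
    (Mg' * Mg'))

def F4 (ω : Ω7) : ℝ≥0∞ :=
  ind1 ω * ind2 ω *
  ENNReal.ofReal ((g (ω 0) * Mg) *
    (heatK (uco ω) (ω 0 - ω 5) *
      (4 * Real.pi * (Cj * Real.exp (θ * vco ω)) * heatK (vco ω / 2) (ω 5 - ω 6))) *
    (Mg' * Mg'))

def F3 (ω : Ω7) : ℝ≥0∞ :=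
  ind1 ω * ind2 ω *
  ENNReal.ofReal ((g (ω 0) * Mg) *
    (heatK (uco ω) (ω 0 - ω 5) *
      (4 * Real.pi * (Cj * Real.exp (θ * vco ω)))) *
    (Mg' * Mg'))

def F2 (ω : Ω7) : ℝ≥0∞ :=
  ind1 ω * ind2 ω *
  ENNReal.ofReal ((g (ω 0) * Mg) *
    (4 * Real.pi * (Cj * Real.exp (θ * vco ω))) *
    (Mg' * Mg'))

def F1 (Lg : ℝ≥0∞) (ω : Ω7) : ℝ≥0∞ :=
  ind1 ω * ind2 ω *
  (Lg * ENNReal.ofReal (Mg *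
    (4 * Real.pi * (Cj * Real.exp (θ * vco ω))) *
    (Mg' * Mg')))

variable {g}

lemma measurable_Fb (hg : Measurable g) : Measurable (Fb g θ Mg Mg') :=
  ((measurable_ind1.mul measurable_ind2).mul
    (ENNReal.measurable_ofReal.comp (by fun_prop)))

lemma measurable_F6 (hg : Measurable g) : Measurable (F6 g θ Mg Mg') :=
  ((measurable_ind1.mul measurable_ind2).mul
    (ENNReal.measurable_ofReal.comp (by fun_prop)))

lemma measurable_F5 (hg : Measurable g) : Measurable (F5 g θ Mg Mg') :=
  ((measurable_ind1.mul measurable_ind2).mul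
    (ENNReal.measurable_ofReal.comp (by fun_prop)))

lemma measurable_F4 (hg : Measurable g) : Measurable (F4 g θ Mg Mg') :=
  ((measurable_ind1.mul measurable_ind2).mul
    (ENNReal.measurable_ofReal.comp (by fun_prop)))

lemma measurable_F3 (hg : Measurable g) : Measurable (F3 g θ Mg Mg') :=
  ((measurable_ind1.mul measurable_ind2).mul
    (ENNReal.measurable_ofReal.comp (by fun_prop)))

lemma measurable_F2 (hg : Measurable g) : Measurable (F2 g θ Mg Mg') :=
  ((measurable_ind1.mul measurable_ind2).mul
    (ENNReal.measurable_ofReal.comp (by fun_prop)))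

lemma measurable_F1 (Lg : ℝ≥0∞) : Measurable (F1 θ Mg Mg' Lg) :=
  ((measurable_ind1.mul measurable_ind2).mul
    (measurable_const.mul (ENNReal.measurable_ofReal.comp (by fun_prop))))

/-! #### Coordinate bookkeeping for `update` -/

lemma uco_update (x : Ω7) (w : Plane) {i : Fin 7} (h : i ≠ 4) : uco (update x i w) = uco x := by
  unfold uco
  rw [Function.update_of_ne (Ne.symm h)]

lemma vco_update (x : Ω7) (w : Plane) {i : Fin 7} (h : i ≠ 4) : vco (update x i w) = vco x := by
  unfold vco
  rw [Function.update_of_ne (Ne.symm h)]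

lemma ind1_update (x : Ω7) (w : Plane) {i : Fin 7} (h : i ≠ 4) :
    ind1 (update x i w) = ind1 x := by
  unfold ind1
  rw [uco_update x w h]

lemma ind2_update (x : Ω7) (w : Plane) {i : Fin 7} (h : i ≠ 4) :
    ind2 (update x i w) = ind2 x := by
  unfold ind2
  rw [uco_update x w h, vco_update x w h]

/-! #### Evaluating the marginals one slot at a time -/

lemma eval_slot1 (x : Ω7) :
    ∫⁻ w : Plane, Fb g θ Mg Mg' (update x 1 w) = F6 g θ Mg Mg' x := by
  have hcoord : ∀ w : Plane, Fb g θ Mg Mg' (update x 1 w)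
      = ind1 x * ind2 x * ENNReal.ofReal ((g (x 0) * Mg) *
        (heatK (uco x) (x 0 - x 5) * heatK (uco x) (w - x 5) *
          (4 * Real.pi * (Cj * Real.exp (θ * vco x)) * heatK (vco x / 2) (x 5 - x 6)) *
          (heatK (1 - uco x - vco x) (x 6 - x 2) * heatK (1 - uco x - vco x) (x 6 - x 3))) *
        (Mg' * Mg')) := by
    intro w
    unfold Fb
    rw [ind1_update x w (by decide), ind2_update x w (by decide),
      uco_update x w (by decide), vco_update x w (by decide)]
    simp [Function.update_apply]
  simp only [hcoord]
  rw [lintegral_const_mul' _ _ (ENNReal.mul_ne_top (ind1_ne_top x) (ind2_ne_top x))]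
  unfold F6
  by_cases h1 : uco x ∈ Ioo (0:ℝ) 1
  · by_cases h2 : vco x ∈ Ioo (0:ℝ) (1 - uco x)
    · congr 1
      have hu0 : (0:ℝ) < uco x := h1.1
      have hsplit : ∀ w : Plane,
          ((g (x 0) * Mg) *
            (heatK (uco x) (x 0 - x 5) * heatK (uco x) (w - x 5) *
              (4 * Real.pi * (Cj * Real.exp (θ * vco x)) * heatK (vco x / 2) (x 5 - x 6)) *
              (heatK (1 - uco x - vco x) (x 6 - x 2) * heatK (1 - uco x - vco x) (x 6 - x 3))) *
            (Mg' * Mg'))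
          = ((g (x 0) * Mg) *
            (heatK (uco x) (x 0 - x 5) *
              (4 * Real.pi * (Cj * Real.exp (θ * vco x)) * heatK (vco x / 2) (x 5 - x 6)) *
              (heatK (1 - uco x - vco x) (x 6 - x 2) * heatK (1 - uco x - vco x) (x 6 - x 3))) *
            (Mg' * Mg')) * heatK (uco x) (w - x 5) := by
        intro w
        ring
      simp only [hsplit, ENNReal.ofReal_mul' (heatK_nonneg hu0.le _)]
      rw [lintegral_const_mul' _ _ ofReal_ne_top, lintegral_heatK' hu0 (x 5), mul_one]
    · unfold ind2
      rw [indicator_of_notMem h2]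
      simp
  · unfold ind1
    rw [indicator_of_notMem h1]
    simp

lemma eval_slot3 (x : Ω7) :
    ∫⁻ w : Plane, F6 g θ Mg Mg' (update x 3 w) = F5 g θ Mg Mg' x := by
  have hcoord : ∀ w : Plane, F6 g θ Mg Mg' (update x 3 w)
      = ind1 x * ind2 x * ENNReal.ofReal ((g (x 0) * Mg) *
        (heatK (uco x) (x 0 - x 5) *
          (4 * Real.pi * (Cj * Real.exp (θ * vco x)) * heatK (vco x / 2) (x 5 - x 6)) *
          (heatK (1 - uco x - vco x) (x 6 - x 2) * heatK (1 - uco x - vco x) (x 6 - w))) *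
        (Mg' * Mg')) := by
    intro w
    unfold F6
    rw [ind1_update x w (by decide), ind2_update x w (by decide),
      uco_update x w (by decide), vco_update x w (by decide)]
    simp [Function.update_apply]
  simp only [hcoord]
  rw [lintegral_const_mul' _ _ (ENNReal.mul_ne_top (ind1_ne_top x) (ind2_ne_top x))]
  unfold F5
  by_cases h1 : uco x ∈ Ioo (0:ℝ) 1
  · by_cases h2 : vco x ∈ Ioo (0:ℝ) (1 - uco x)
    · congr 1
      have hu0 : (0:ℝ) < 1 - uco x - vco x := by
        have := h2.2
        linarith
      have hsplit : ∀ w : Plane,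
          ((g (x 0) * Mg) *
            (heatK (uco x) (x 0 - x 5) *
              (4 * Real.pi * (Cj * Real.exp (θ * vco x)) * heatK (vco x / 2) (x 5 - x 6)) *
              (heatK (1 - uco x - vco x) (x 6 - x 2) * heatK (1 - uco x - vco x) (x 6 - w))) *
            (Mg' * Mg'))
          = ((g (x 0) * Mg) *
            (heatK (uco x) (x 0 - x 5) *
              (4 * Real.pi * (Cj * Real.exp (θ * vco x)) * heatK (vco x / 2) (x 5 - x 6)) *
              heatK (1 - uco x - vco x) (x 6 - x 2)) *
            (Mg' * Mg')) * heatK (1 - uco x - vco x) (x 6 - w) := by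
        intro w
        ring
      simp only [hsplit, ENNReal.ofReal_mul' (heatK_nonneg hu0.le _)]
      rw [lintegral_const_mul' _ _ ofReal_ne_top, lintegral_heatK'' hu0 (x 6), mul_one]
    · unfold ind2
      rw [indicator_of_notMem h2]
      simp
  · unfold ind1
    rw [indicator_of_notMem h1]
    simp

lemma eval_slot2 (x : Ω7) :
    ∫⁻ w : Plane, F5 g θ Mg Mg' (update x 2 w) = F4 g θ Mg Mg' x := by
  have hcoord : ∀ w : Plane, F5 g θ Mg Mg' (update x 2 w)
      = ind1 x * ind2 x * ENNReal.ofReal ((g (x 0) * Mg) *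
        (heatK (uco x) (x 0 - x 5) *
          (4 * Real.pi * (Cj * Real.exp (θ * vco x)) * heatK (vco x / 2) (x 5 - x 6)) *
          heatK (1 - uco x - vco x) (x 6 - w)) *
        (Mg' * Mg')) := by
    intro w
    unfold F5
    rw [ind1_update x w (by decide), ind2_update x w (by decide),
      uco_update x w (by decide), vco_update x w (by decide)]
    simp [Function.update_apply]
  simp only [hcoord]
  rw [lintegral_const_mul' _ _ (ENNReal.mul_ne_top (ind1_ne_top x) (ind2_ne_top x))]
  unfold F4
  by_cases h1 : uco x ∈ Ioo (0:ℝ) 1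
  · by_cases h2 : vco x ∈ Ioo (0:ℝ) (1 - uco x)
    · congr 1
      have hu0 : (0:ℝ) < 1 - uco x - vco x := by
        have := h2.2
        linarith
      have hsplit : ∀ w : Plane,
          ((g (x 0) * Mg) *
            (heatK (uco x) (x 0 - x 5) *
              (4 * Real.pi * (Cj * Real.exp (θ * vco x)) * heatK (vco x / 2) (x 5 - x 6)) *
              heatK (1 - uco x - vco x) (x 6 - w)) *
            (Mg' * Mg'))
          = ((g (x 0) * Mg) *
            (heatK (uco x) (x 0 - x 5) *
              (4 * Real.pi * (Cj * Real.exp (θ * vco x)) * heatK (vco x / 2) (x 5 - x 6))) *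
            (Mg' * Mg')) * heatK (1 - uco x - vco x) (x 6 - w) := by
        intro w
        ring
      simp only [hsplit, ENNReal.ofReal_mul' (heatK_nonneg hu0.le _)]
      rw [lintegral_const_mul' _ _ ofReal_ne_top, lintegral_heatK'' hu0 (x 6), mul_one]
    · unfold ind2
      rw [indicator_of_notMem h2]
      simp
  · unfold ind1
    rw [indicator_of_notMem h1]
    simp

lemma eval_slot6 (x : Ω7) :
    ∫⁻ w : Plane, F4 g θ Mg Mg' (update x 6 w) = F3 g θ Mg Mg' x := by
  have hcoord : ∀ w : Plane, F4 g θ Mg Mg' (update x 6 w)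
      = ind1 x * ind2 x * ENNReal.ofReal ((g (x 0) * Mg) *
        (heatK (uco x) (x 0 - x 5) *
          (4 * Real.pi * (Cj * Real.exp (θ * vco x)) * heatK (vco x / 2) (x 5 - w))) *
        (Mg' * Mg')) := by
    intro w
    unfold F4
    rw [ind1_update x w (by decide), ind2_update x w (by decide),
      uco_update x w (by decide), vco_update x w (by decide)]
    simp [Function.update_apply]
  simp only [hcoord]
  rw [lintegral_const_mul' _ _ (ENNReal.mul_ne_top (ind1_ne_top x) (ind2_ne_top x))]
  unfold F3
  by_cases h1 : uco x ∈ Ioo (0:ℝ) 1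
  · by_cases h2 : vco x ∈ Ioo (0:ℝ) (1 - uco x)
    · congr 1
      have hu0 : (0:ℝ) < vco x / 2 := by
        have := h2.1
        linarith
      have hsplit : ∀ w : Plane,
          ((g (x 0) * Mg) *
            (heatK (uco x) (x 0 - x 5) *
              (4 * Real.pi * (Cj * Real.exp (θ * vco x)) * heatK (vco x / 2) (x 5 - w))) *
            (Mg' * Mg'))
          = ((g (x 0) * Mg) *
            (heatK (uco x) (x 0 - x 5) *
              (4 * Real.pi * (Cj * Real.exp (θ * vco x)))) *
            (Mg' * Mg')) * heatK (vco x / 2) (x 5 - w) := by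
        intro w
        ring
      simp only [hsplit, ENNReal.ofReal_mul' (heatK_nonneg hu0.le _)]
      rw [lintegral_const_mul' _ _ ofReal_ne_top, lintegral_heatK'' hu0 (x 5), mul_one]
    · unfold ind2
      rw [indicator_of_notMem h2]
      simp
  · unfold ind1
    rw [indicator_of_notMem h1]
    simp

lemma eval_slot5 (x : Ω7) :
    ∫⁻ w : Plane, F3 g θ Mg Mg' (update x 5 w) = F2 g θ Mg Mg' x := by
  have hcoord : ∀ w : Plane, F3 g θ Mg Mg' (update x 5 w)
      = ind1 x * ind2 x * ENNReal.ofReal ((g (x 0) * Mg) *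
        (heatK (uco x) (x 0 - w) *
          (4 * Real.pi * (Cj * Real.exp (θ * vco x)))) *
        (Mg' * Mg')) := by
    intro w
    unfold F3
    rw [ind1_update x w (by decide), ind2_update x w (by decide),
      uco_update x w (by decide), vco_update x w (by decide)]
    simp [Function.update_apply]
  simp only [hcoord]
  rw [lintegral_const_mul' _ _ (ENNReal.mul_ne_top (ind1_ne_top x) (ind2_ne_top x))]
  unfold F2
  by_cases h1 : uco x ∈ Ioo (0:ℝ) 1
  · by_cases h2 : vco x ∈ Ioo (0:ℝ) (1 - uco x)
    · congr 1
      have hu0 : (0:ℝ) < uco x := h1.1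
      have hsplit : ∀ w : Plane,
          ((g (x 0) * Mg) *
            (heatK (uco x) (x 0 - w) *
              (4 * Real.pi * (Cj * Real.exp (θ * vco x)))) *
            (Mg' * Mg'))
          = ((g (x 0) * Mg) *
            (4 * Real.pi * (Cj * Real.exp (θ * vco x))) *
            (Mg' * Mg')) * heatK (uco x) (x 0 - w) := by
        intro w
        ring
      simp only [hsplit, ENNReal.ofReal_mul' (heatK_nonneg hu0.le _)]
      rw [lintegral_const_mul' _ _ ofReal_ne_top, lintegral_heatK'' hu0 (x 0), mul_one]
    · unfold ind2
      rw [indicator_of_notMem h2]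
      simp
  · unfold ind1
    rw [indicator_of_notMem h1]
    simp

lemma eval_slot0 (hg0 : ∀ p, 0 ≤ g p) (x : Ω7) :
    ∫⁻ w : Plane, F2 g θ Mg Mg' (update x 0 w)
      = F1 θ Mg Mg' (∫⁻ p : Plane, ENNReal.ofReal (g p)) x := by
  have hcoord : ∀ w : Plane, F2 g θ Mg Mg' (update x 0 w)
      = ind1 x * ind2 x * (ENNReal.ofReal (g w) * ENNReal.ofReal (Mg *
          (4 * Real.pi * (Cj * Real.exp (θ * vco x))) * (Mg' * Mg'))) := by
    intro w
    unfold F2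
    rw [ind1_update x w (by decide), ind2_update x w (by decide),
      vco_update x w (by decide)]
    simp only [Function.update_self]
    rw [show (g w * Mg) * (4 * Real.pi * (Cj * Real.exp (θ * vco x))) * (Mg' * Mg')
        = g w * (Mg * (4 * Real.pi * (Cj * Real.exp (θ * vco x))) * (Mg' * Mg')) by ring,
      ENNReal.ofReal_mul (hg0 w)]
  simp only [hcoord]
  rw [lintegral_const_mul' _ _ (ENNReal.mul_ne_top (ind1_ne_top x) (ind2_ne_top x))]
  unfold F1
  rw [lintegral_mul_const' _ _ ofReal_ne_top]

/-! #### Collapsing the full marginal -/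

lemma lmarginal_collapse (hg : Measurable g) (hg0 : ∀ p, 0 ≤ g p) (pt : Ω7) :
    (∫⋯∫⁻_Finset.univ, Fb g θ Mg Mg' ∂(fun _ => (volume : Measure Plane))) pt
      = ∫⁻ z : Plane, F1 θ Mg Mg' (∫⁻ p : Plane, ENNReal.ofReal (g p)) (Function.update pt 4 z) := by
  rw [show (Finset.univ : Finset (Fin 7)) = insert 1 {0,2,3,4,5,6} from by decide,
    lmarginal_insert' _ (measurable_Fb θ Mg Mg' hg) (by decide)]
  simp only [eval_slot1]
  rw [show ({0,2,3,4,5,6} : Finset (Fin 7)) = insert 3 {0,2,4,5,6} from by decide,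
    lmarginal_insert' _ (measurable_F6 θ Mg Mg' hg) (by decide)]
  simp only [eval_slot3]
  rw [show ({0,2,4,5,6} : Finset (Fin 7)) = insert 2 {0,4,5,6} from by decide,
    lmarginal_insert' _ (measurable_F5 θ Mg Mg' hg) (by decide)]
  simp only [eval_slot2]
  rw [show ({0,4,5,6} : Finset (Fin 7)) = insert 6 {0,4,5} from by decide,
    lmarginal_insert' _ (measurable_F4 θ Mg Mg' hg) (by decide)]
  simp only [eval_slot6]
  rw [show ({0,4,5} : Finset (Fin 7)) = insert 5 {0,4} from by decide,
    lmarginal_insert' _ (measurable_F3 θ Mg Mg' hg) (by decide)]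
  simp only [eval_slot5]
  rw [show ({0,4} : Finset (Fin 7)) = insert 0 {4} from by decide,
    lmarginal_insert' _ (measurable_F2 θ Mg Mg' hg) (by decide)]
  simp only [eval_slot0 θ Mg Mg' hg0]
  rw [lmarginal_singleton]

/-! #### Bounding the final integral -/

lemma ind_one_mul (S : Set ℝ) (f : ℝ → ℝ≥0∞) (c : ℝ) :
    S.indicator (1 : ℝ → ℝ≥0∞) c * f c = S.indicator f c := by
  by_cases h : c ∈ S <;> simp [h]

lemma F1_int_le {Lg : ℝ≥0∞} (hθ : θ < 0) (hLg : Lg ≠ ⊤) (pt : Ω7) :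
    ∫⁻ z : Plane, F1 θ Mg Mg' Lg (Function.update pt 4 z)
      ≤ Lg * ENNReal.ofReal (Mg * (4 * Real.pi * Cj) * (Mg' * Mg')) * ENNReal.ofReal (-θ)⁻¹ := by
  have hφ : Measurable fun z : Plane => F1 θ Mg Mg' Lg (Function.update pt 4 z) :=
    (measurable_F1 θ Mg Mg' Lg).comp (measurable_update pt)
  rw [lintegral_plane_split _ hφ]
  have hc : ∀ a b : ℝ, F1 θ Mg Mg' Lg (Function.update pt 4 (mk2 a b))
      = (Ioo (0:ℝ) 1).indicator (1 : ℝ → ℝ≥0∞) a *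
        ((Ioo (0:ℝ) (1-a)).indicator (1:ℝ→ℝ≥0∞) b *
          (Lg * ENNReal.ofReal (Mg * (4 * Real.pi * (Cj * Real.exp (θ * b))) * (Mg' * Mg')))) := by
    intro a b
    unfold F1 ind1 ind2 uco vco
    rw [Function.update_self, mul_assoc]
    simp only [mk2_zero, mk2_one]
  simp only [hc]
  have inner_le : ∀ a : ℝ, a ∈ Ioo (0:ℝ) 1 →
      (∫⁻ b : ℝ, (Ioo (0:ℝ) (1-a)).indicator (1:ℝ→ℝ≥0∞) b *
        (Lg * ENNReal.ofReal (Mg * (4 * Real.pi * (Cj * Real.exp (θ * b))) * (Mg' * Mg'))))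
      ≤ Lg * ENNReal.ofReal (Mg * (4 * Real.pi * Cj) * (Mg' * Mg')) * ENNReal.ofReal (-θ)⁻¹ := by
    intro a ha
    have hsub : Ioo (0:ℝ) (1-a) ⊆ Ioo (0:ℝ) 1 := by
      apply Ioo_subset_Ioo le_rfl
      have := ha.1
      linarith
    have hsplit : ∀ b : ℝ,
        Lg * ENNReal.ofReal (Mg * (4 * Real.pi * (Cj * Real.exp (θ * b))) * (Mg' * Mg'))
        = (Lg * ENNReal.ofReal (Mg * (4 * Real.pi * Cj) * (Mg' * Mg')))
            * ENNReal.ofReal (Real.exp (θ * b)) := by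
      intro b
      rw [show Mg * (4 * Real.pi * (Cj * Real.exp (θ * b))) * (Mg' * Mg')
          = (Mg * (4 * Real.pi * Cj) * (Mg' * Mg')) * Real.exp (θ * b) by ring,
        ENNReal.ofReal_mul' (Real.exp_nonneg _), ← mul_assoc]
    calc ∫⁻ b : ℝ, (Ioo (0:ℝ) (1-a)).indicator (1:ℝ→ℝ≥0∞) b *
          (Lg * ENNReal.ofReal (Mg * (4 * Real.pi * (Cj * Real.exp (θ * b))) * (Mg' * Mg')))
        = ∫⁻ b : ℝ, (Ioo (0:ℝ) (1-a)).indicator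
            (fun b' => Lg * ENNReal.ofReal
              (Mg * (4 * Real.pi * (Cj * Real.exp (θ * b'))) * (Mg' * Mg'))) b :=
          lintegral_congr fun b => ind_one_mul _
            (fun b' => Lg * ENNReal.ofReal
              (Mg * (4 * Real.pi * (Cj * Real.exp (θ * b'))) * (Mg' * Mg'))) b
      _ = ∫⁻ b in Ioo (0:ℝ) (1-a),
            Lg * ENNReal.ofReal (Mg * (4 * Real.pi * (Cj * Real.exp (θ * b))) * (Mg' * Mg')) := by
          rw [lintegral_indicator measurableSet_Ioo]
      _ ≤ ∫⁻ b in Ioo (0:ℝ) 1,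
            Lg * ENNReal.ofReal (Mg * (4 * Real.pi * (Cj * Real.exp (θ * b))) * (Mg' * Mg')) :=
          lintegral_mono_set hsub
      _ = (Lg * ENNReal.ofReal (Mg * (4 * Real.pi * Cj) * (Mg' * Mg')))
            * ∫⁻ b in Ioo (0:ℝ) 1, ENNReal.ofReal (Real.exp (θ * b)) := by
          simp only [hsplit]
          rw [lintegral_const_mul' _ _ (ENNReal.mul_ne_top hLg ofReal_ne_top)]
      _ ≤ _ := mul_le_mul_right (lint_exp_le hθ) _
  calc ∫⁻ a : ℝ, ∫⁻ b : ℝ, (Ioo (0:ℝ) 1).indicator (1:ℝ→ℝ≥0∞) a *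
        ((Ioo (0:ℝ) (1-a)).indicator (1:ℝ→ℝ≥0∞) b *
          (Lg * ENNReal.ofReal (Mg * (4 * Real.pi * (Cj * Real.exp (θ * b))) * (Mg' * Mg'))))
      = ∫⁻ a : ℝ, (Ioo (0:ℝ) 1).indicator (1:ℝ→ℝ≥0∞) a *
          ∫⁻ b : ℝ, ((Ioo (0:ℝ) (1-a)).indicator (1:ℝ→ℝ≥0∞) b *
            (Lg * ENNReal.ofReal (Mg * (4 * Real.pi * (Cj * Real.exp (θ * b))) * (Mg' * Mg')))) := by
        apply lintegral_congr
        intro a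
        rw [lintegral_const_mul']
        by_cases h : a ∈ Ioo (0:ℝ) 1 <;> simp [h]
    _ ≤ ∫⁻ a : ℝ, (Ioo (0:ℝ) 1).indicator (1:ℝ→ℝ≥0∞) a *
          (Lg * ENNReal.ofReal (Mg * (4 * Real.pi * Cj) * (Mg' * Mg')) * ENNReal.ofReal (-θ)⁻¹) := by
        apply lintegral_mono
        intro a
        by_cases h : a ∈ Ioo (0:ℝ) 1
        · exact mul_le_mul_right (inner_le a h) _
        · simp [indicator_of_notMem h]
    _ = ∫⁻ a in Ioo (0:ℝ) 1,
          (Lg * ENNReal.ofReal (Mg * (4 * Real.pi * Cj) * (Mg' * Mg')) * ENNReal.ofReal (-θ)⁻¹) := by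
        rw [← lintegral_indicator measurableSet_Ioo]
        exact lintegral_congr fun a => ind_one_mul _
          (fun _ => Lg * ENNReal.ofReal (Mg * (4 * Real.pi * Cj) * (Mg' * Mg'))
            * ENNReal.ofReal (-θ)⁻¹) a
    _ = _ := by
        rw [setLIntegral_const, Real.volume_Ioo]
        norm_num

/-! #### The inner comparison lemma -/

lemma const_mul_lintegral_mul_const {α : Type*} [MeasurableSpace α] (μ : Measure α)
    (c d : ℝ≥0∞) (hc : c ≠ ⊤) (hd : d ≠ ⊤) (f : α → ℝ≥0∞) :
    c * (∫⁻ a, f a ∂μ) * d = ∫⁻ a, c * f a * d ∂μ := by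
  rw [show (fun a => c * f a * d) = fun a => (c * f a) * d from rfl]
  rw [lintegral_mul_const' _ _ hd, lintegral_const_mul' _ _ hc]

lemma inner_le_marg {g' : Plane → ℝ} (hg : Measurable g) (hg0 : ∀ p, 0 ≤ g p)
    (hgM : ∀ p, g p ≤ Mg) (hg'0 : ∀ p, 0 ≤ g' p) (hg'M : ∀ p, g' p ≤ Mg')
    (hMg'0 : 0 ≤ Mg') (x : Ω7) :
    ENNReal.ofReal (g (x 0) * g (x 1)) * Wker θ 1 (x 0) (x 1) (x 2) (x 3) *
      ENNReal.ofReal (g' (x 2) * g' (x 3))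
      ≤ (∫⋯∫⁻_({4,5,6} : Finset (Fin 7)), Fb g θ Mg Mg'
          ∂(fun _ => (volume : Measure Plane))) x := by
  have hFbm := measurable_Fb θ Mg Mg' hg
  have netop : ∀ a b : ℝ, (Ioo (0:ℝ) 1).indicator (1:ℝ→ℝ≥0∞) a *
      (Ioo (0:ℝ) (1-a)).indicator (1:ℝ→ℝ≥0∞) b ≠ ⊤ := by
    intro a b
    apply ENNReal.mul_ne_top
    · by_cases h : a ∈ Ioo (0:ℝ) 1 <;> simp [h]
    · by_cases h : b ∈ Ioo (0:ℝ) (1-a) <;> simp [h]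
  -- the y,y'-integral core for parameters a b
  set H : ℝ → ℝ → ℝ≥0∞ := fun a b => ∫⁻ y : Plane, ∫⁻ y' : Plane,
    ENNReal.ofReal ((g (x 0) * Mg) *
      (heatK a (x 0 - y) * heatK a (x 1 - y) *
        (4 * Real.pi * (Cj * Real.exp (θ * b)) * heatK (b / 2) (y - y')) *
        (heatK (1 - a - b) (y' - x 2) * heatK (1 - a - b) (y' - x 3))) *
      (Mg' * Mg')) with hH
  -- identify the marginal over {4,5,6}
  have hGz : ∀ a b : ℝ,
      (∫⋯∫⁻_({5,6} : Finset (Fin 7)), Fb g θ Mg Mg'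
          ∂(fun _ => (volume : Measure Plane))) (Function.update x 4 (mk2 a b))
      = (Ioo (0:ℝ) 1).indicator (1:ℝ→ℝ≥0∞) a *
          (Ioo (0:ℝ) (1-a)).indicator (1:ℝ→ℝ≥0∞) b * H a b := by
    intro a b
    rw [lmarginal_insert _ hFbm (by decide)]
    have h6 : ∀ w : Ω7, (∫⋯∫⁻_({6} : Finset (Fin 7)), Fb g θ Mg Mg'
        ∂(fun _ => (volume : Measure Plane))) w
        = ∫⁻ y' : Plane, Fb g θ Mg Mg' (Function.update w 6 y') := by
      intro w
      rw [lmarginal_singleton]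
    simp only [h6]
    have hFbval : ∀ y y' : Plane,
        Fb g θ Mg Mg' (Function.update (Function.update (Function.update x 4 (mk2 a b)) 5 y) 6 y')
        = (Ioo (0:ℝ) 1).indicator (1:ℝ→ℝ≥0∞) a * (Ioo (0:ℝ) (1-a)).indicator (1:ℝ→ℝ≥0∞) b *
          ENNReal.ofReal ((g (x 0) * Mg) *
            (heatK a (x 0 - y) * heatK a (x 1 - y) *
              (4 * Real.pi * (Cj * Real.exp (θ * b)) * heatK (b / 2) (y - y')) *
              (heatK (1 - a - b) (y' - x 2) * heatK (1 - a - b) (y' - x 3))) *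
            (Mg' * Mg')) := by
      intro y y'
      unfold Fb ind1 ind2 uco vco
      simp [Function.update_apply, mk2_zero, mk2_one]
    simp only [hFbval]
    have hin : ∀ y : Plane, ∫⁻ y' : Plane,
        (Ioo (0:ℝ) 1).indicator (1:ℝ→ℝ≥0∞) a * (Ioo (0:ℝ) (1-a)).indicator (1:ℝ→ℝ≥0∞) b *
          ENNReal.ofReal ((g (x 0) * Mg) *
            (heatK a (x 0 - y) * heatK a (x 1 - y) *
              (4 * Real.pi * (Cj * Real.exp (θ * b)) * heatK (b / 2) (y - y')) *
              (heatK (1 - a - b) (y' - x 2) * heatK (1 - a - b) (y' - x 3))) *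
            (Mg' * Mg'))
        = (Ioo (0:ℝ) 1).indicator (1:ℝ→ℝ≥0∞) a * (Ioo (0:ℝ) (1-a)).indicator (1:ℝ→ℝ≥0∞) b *
          ∫⁻ y' : Plane, ENNReal.ofReal ((g (x 0) * Mg) *
            (heatK a (x 0 - y) * heatK a (x 1 - y) *
              (4 * Real.pi * (Cj * Real.exp (θ * b)) * heatK (b / 2) (y - y')) *
              (heatK (1 - a - b) (y' - x 2) * heatK (1 - a - b) (y' - x 3))) *
            (Mg' * Mg')) := by
      intro y
      exact lintegral_const_mul' _ _ (netop a b)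
    simp only [hin]
    rw [lintegral_const_mul' _ _ (netop a b), hH]
  rw [show ({4,5,6} : Finset (Fin 7)) = insert 4 {5,6} from rfl,
    lmarginal_insert _ hFbm (by decide)]
  have hmG : Measurable (∫⋯∫⁻_({5,6} : Finset (Fin 7)), Fb g θ Mg Mg'
      ∂(fun _ => (volume : Measure Plane))) :=
    Measurable.lmarginal (fun _ => (volume : Measure Plane)) hFbm
  have hmφ : Measurable fun z : Plane =>
      (∫⋯∫⁻_({5,6} : Finset (Fin 7)), Fb g θ Mg Mg'
        ∂(fun _ => (volume : Measure Plane))) (Function.update x 4 z) :=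
    hmG.comp (measurable_update x)
  rw [lintegral_plane_split
    (fun z => (∫⋯∫⁻_({5,6} : Finset (Fin 7)), Fb g θ Mg Mg'
      ∂(fun _ => (volume : Measure Plane))) (Function.update x 4 z)) hmφ]
  simp only [hGz]
  -- turn the indicator double integral into iterated set integrals
  have hsetform :
      (∫⁻ a : ℝ, ∫⁻ b : ℝ, (Ioo (0:ℝ) 1).indicator (1:ℝ→ℝ≥0∞) a *
        (Ioo (0:ℝ) (1-a)).indicator (1:ℝ→ℝ≥0∞) b * H a b)
      = ∫⁻ a in Ioo (0:ℝ) 1, ∫⁻ b in Ioo (0:ℝ) (1-a), H a b := by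
    have h1 : ∀ a : ℝ, ∫⁻ b : ℝ, (Ioo (0:ℝ) 1).indicator (1:ℝ→ℝ≥0∞) a *
        (Ioo (0:ℝ) (1-a)).indicator (1:ℝ→ℝ≥0∞) b * H a b
        = (Ioo (0:ℝ) 1).indicator (1:ℝ→ℝ≥0∞) a * ∫⁻ b in Ioo (0:ℝ) (1-a), H a b := by
      intro a
      have : ∀ b : ℝ, (Ioo (0:ℝ) 1).indicator (1:ℝ→ℝ≥0∞) a *
          (Ioo (0:ℝ) (1-a)).indicator (1:ℝ→ℝ≥0∞) b * H a b
          = (Ioo (0:ℝ) 1).indicator (1:ℝ→ℝ≥0∞) a *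
            ((Ioo (0:ℝ) (1-a)).indicator (fun b' => H a b') b) := by
        intro b
        rw [mul_assoc, ind_one_mul]
      simp only [this]
      rw [lintegral_const_mul' _ _ (by
        by_cases h : a ∈ Ioo (0:ℝ) 1 <;> simp [h]),
        lintegral_indicator measurableSet_Ioo]
    simp only [h1]
    rw [← lintegral_indicator measurableSet_Ioo]
    exact lintegral_congr fun a => ind_one_mul _ (fun a' => ∫⁻ b in Ioo (0:ℝ) (1-a'), H a' b) a
  rw [hsetform]
  -- now the left-hand side
  unfold Wker
  have hC1 : ENNReal.ofReal (g (x 0) * g (x 1)) ≠ ⊤ := ofReal_ne_top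
  have hC2 : ENNReal.ofReal (g' (x 2) * g' (x 3)) ≠ ⊤ := ofReal_ne_top
  rw [const_mul_lintegral_mul_const _ _ _ hC1 hC2]
  apply setLIntegral_mono' measurableSet_Ioo
  intro u hu
  rw [const_mul_lintegral_mul_const _ _ _ hC1 hC2]
  have hone : (1:ℝ) - u = 1 - u := rfl
  apply setLIntegral_mono' measurableSet_Ioo
  intro u' hu'
  rw [const_mul_lintegral_mul_const _ _ _ hC1 hC2, hH]
  apply lintegral_mono
  intro y
  beta_reduce
  rw [const_mul_lintegral_mul_const _ _ _ hC1 hC2]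
  apply lintegral_mono
  intro y'
  beta_reduce
  -- the pointwise inequality
  have hu0 : (0:ℝ) < u := hu.1
  have hu1 : u < 1 := hu.2
  have hu'0 : (0:ℝ) < u' := hu'.1
  have hu'1 : u' < 1 - u := hu'.2
  have hu'' : (0:ℝ) ≤ 1 - u - u' := by linarith
  have k1 := heatK_nonneg hu0.le (x 0 - y)
  have k2 := heatK_nonneg hu0.le (x 1 - y)
  have k3 := heatK_nonneg (by linarith : (0:ℝ) ≤ u'/2) (y - y')
  have k4 := heatK_nonneg hu'' (y' - x 2)
  have k5 := heatK_nonneg hu'' (y' - x 3)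
  have hjfn := jfn_nonneg θ u'
  have h4pi : (0:ℝ) ≤ 4 * Real.pi := by positivity
  have hP : (0:ℝ) ≤ heatK u (x 0 - y) * heatK u (x 1 - y) *
      (4 * Real.pi * jfn θ u' * heatK (u' / 2) (y - y')) *
      (heatK (1 - u - u') (y' - x 2) * heatK (1 - u - u') (y' - x 3)) :=
    mul_nonneg (mul_nonneg (mul_nonneg k1 k2)
      (mul_nonneg (mul_nonneg h4pi hjfn) k3)) (mul_nonneg k4 k5)
  have hgg : (0:ℝ) ≤ g (x 0) * g (x 1) := mul_nonneg (hg0 _) (hg0 _)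
  rw [← ENNReal.ofReal_mul hgg, ← ENNReal.ofReal_mul (mul_nonneg hgg hP)]
  apply ENNReal.ofReal_le_ofReal
  have hjle : jfn θ u' ≤ Cj * Real.exp (θ * u') := jfn_le hu'0 (by linarith)
  have hmid : heatK u (x 0 - y) * heatK u (x 1 - y) *
      (4 * Real.pi * jfn θ u' * heatK (u' / 2) (y - y')) *
      (heatK (1 - u - u') (y' - x 2) * heatK (1 - u - u') (y' - x 3))
      ≤ heatK u (x 0 - y) * heatK u (x 1 - y) *
      (4 * Real.pi * (Cj * Real.exp (θ * u')) * heatK (u' / 2) (y - y')) *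
      (heatK (1 - u - u') (y' - x 2) * heatK (1 - u - u') (y' - x 3)) := by
    apply mul_le_mul_of_nonneg_right _ (mul_nonneg k4 k5)
    apply mul_le_mul_of_nonneg_left _ (mul_nonneg k1 k2)
    apply mul_le_mul_of_nonneg_right _ k3
    exact mul_le_mul_of_nonneg_left hjle h4pi
  have hP' : (0:ℝ) ≤ heatK u (x 0 - y) * heatK u (x 1 - y) *
      (4 * Real.pi * (Cj * Real.exp (θ * u')) * heatK (u' / 2) (y - y')) *
      (heatK (1 - u - u') (y' - x 2) * heatK (1 - u - u') (y' - x 3)) :=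
    le_trans hP hmid
  have hgg' : g (x 0) * g (x 1) ≤ g (x 0) * Mg :=
    mul_le_mul_of_nonneg_left (hgM _) (hg0 _)
  have hg'g' : g' (x 2) * g' (x 3) ≤ Mg' * Mg' :=
    mul_le_mul (hg'M _) (hg'M _) (hg'0 _) hMg'0
  apply mul_le_mul _ hg'g' (mul_nonneg (hg'0 _) (hg'0 _))
    (mul_nonneg (mul_nonneg (hg0 _) (le_trans (hg0 0) (hgM 0))) hP')
  exact mul_le_mul hgg' hmid hP (mul_nonneg (hg0 _) (le_trans (hg0 0) (hgM 0)))

/-! #### Putting it together -/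

lemma Npair_le_lmarginal {g' : Plane → ℝ} (hg : Measurable g) (hg0 : ∀ p, 0 ≤ g p)
    (hgM : ∀ p, g p ≤ Mg) (hg'0 : ∀ p, 0 ≤ g' p) (hg'M : ∀ p, g' p ≤ Mg')
    (hMg'0 : 0 ≤ Mg') :
    Npair g g' θ ≤ (∫⋯∫⁻_Finset.univ, Fb g θ Mg Mg'
      ∂(fun _ => (volume : Measure Plane))) (fun _ => (0 : Plane)) := by
  have hFbm := measurable_Fb θ Mg Mg' hg
  rw [show (Finset.univ : Finset (Fin 7))
    = insert 0 (insert 1 (insert 2 (insert 3 ({4,5,6} : Finset (Fin 7))))) from by decide]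
  unfold Npair
  rw [lmarginal_insert _ hFbm (by decide)]
  apply lintegral_mono
  intro x₁
  beta_reduce
  rw [lmarginal_insert _ hFbm (by decide)]
  apply lintegral_mono
  intro x₂
  beta_reduce
  rw [lmarginal_insert _ hFbm (by decide)]
  apply lintegral_mono
  intro x₁'
  beta_reduce
  rw [lmarginal_insert _ hFbm (by decide)]
  apply lintegral_mono
  intro x₂'
  beta_reduce
  have := inner_le_marg θ Mg Mg' hg hg0 hgM hg'0 hg'M hMg'0
    (Function.update (Function.update (Function.update (Function.update
      (fun _ => (0:Plane)) 0 x₁) 1 x₂) 2 x₁') 3 x₂')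
  simpa [Function.update_apply] using this

lemma Npair_bound {g g' : Plane → ℝ} {θ Mg Mg' : ℝ}
    (hg : Measurable g) (hg0 : ∀ p, 0 ≤ g p)
    (hgM : ∀ p, g p ≤ Mg) (hg'0 : ∀ p, 0 ≤ g' p) (hg'M : ∀ p, g' p ≤ Mg')
    (hMg'0 : 0 ≤ Mg') (hθ : θ < 0)
    (hLg : (∫⁻ p : Plane, ENNReal.ofReal (g p)) ≠ ⊤) :
    Npair g g' θ ≤ (∫⁻ p : Plane, ENNReal.ofReal (g p))
      * ENNReal.ofReal (Mg * (4 * Real.pi * Cj) * (Mg' * Mg')) * ENNReal.ofReal (-θ)⁻¹ := by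
  calc Npair g g' θ
      ≤ (∫⋯∫⁻_Finset.univ, Fb g θ Mg Mg'
          ∂(fun _ => (volume : Measure Plane))) (fun _ => (0 : Plane)) :=
        Npair_le_lmarginal θ Mg Mg' hg hg0 hgM hg'0 hg'M hMg'0
    _ = ∫⁻ z : Plane, F1 θ Mg Mg' (∫⁻ p : Plane, ENNReal.ofReal (g p))
          (Function.update (fun _ => (0:Plane)) 4 z) :=
        lmarginal_collapse θ Mg Mg' hg hg0 _
    _ ≤ _ := F1_int_le θ Mg Mg' hθ hLg _

end Aux

/-- For continuous, compactly supported, nonnegative, not-identically-zero `g, g'` and fixed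
`θ ∈ ℝ`, the ratio `N_{g,g'}(θ − τ̄)/N_{g,g'}(θ)` tends to `0` as `τ̄ → ∞`; equivalently,
`N_{g,g'}(θ̄) → 0` as `θ̄ → −∞`. -/
theorem Npair_ratio_tendsto_zero (g g' : Plane → ℝ)
    (hgc : Continuous g) (hg'c : Continuous g')
    (hgs : HasCompactSupport g) (hg's : HasCompactSupport g')
    (hg0 : ∀ x, 0 ≤ g x) (hg'0 : ∀ x, 0 ≤ g' x)
    (hgne : g ≠ 0) (hg'ne : g' ≠ 0) (θ : ℝ) :
    Filter.Tendsto (fun τ : ℝ => (Npair g g' (θ - τ)).toReal / (Npair g g' θ).toReal)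
      Filter.atTop (nhds 0) ∧
    Filter.Tendsto (fun θbar : ℝ => (Npair g g' θbar).toReal)
      Filter.atBot (nhds 0) := by
  obtain ⟨Mg, hMg⟩ := hgs.exists_bound_of_continuous hgc
  obtain ⟨Mg', hMg'⟩ := hg's.exists_bound_of_continuous hg'c
  have hgM : ∀ p, g p ≤ Mg := fun p => (le_abs_self _).trans (by simpa using hMg p)
  have hg'M : ∀ p, g' p ≤ Mg' := fun p => (le_abs_self _).trans (by simpa using hMg' p)
  have hMg'0 : 0 ≤ Mg' := le_trans (norm_nonneg _) (hMg' 0)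
  have hg : Measurable g := hgc.measurable
  have hLg : (∫⁻ p : Plane, ENNReal.ofReal (g p)) ≠ ⊤ :=
    (hgc.integrable_of_hasCompactSupport hgs).lintegral_lt_top.ne
  set C : ℝ := ((∫⁻ p : Plane, ENNReal.ofReal (g p))
    * ENNReal.ofReal (Mg * (4 * Real.pi * Cj) * (Mg' * Mg'))).toReal with hC
  have key : ∀ θb : ℝ, θb < 0 → (Npair g g' θb).toReal ≤ C * (-θb)⁻¹ := by
    intro θb hθb
    have hb := Npair_bound hg hg0 hgM hg'0 hg'M hMg'0 hθb hLg
    have hne : (∫⁻ p : Plane, ENNReal.ofReal (g p))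
        * ENNReal.ofReal (Mg * (4 * Real.pi * Cj) * (Mg' * Mg'))
        * ENNReal.ofReal (-θb)⁻¹ ≠ ⊤ :=
      ENNReal.mul_ne_top (ENNReal.mul_ne_top hLg ofReal_ne_top) ofReal_ne_top
    have := ENNReal.toReal_mono hne hb
    rwa [ENNReal.toReal_mul, ENNReal.toReal_ofReal (inv_nonneg.mpr (by linarith))] at this
  have part2 : Filter.Tendsto (fun θbar : ℝ => (Npair g g' θbar).toReal)
      Filter.atBot (nhds 0) := by
    apply squeeze_zero' (Filter.Eventually.of_forall fun _ => ENNReal.toReal_nonneg)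
      ((Filter.eventually_lt_atBot (0:ℝ)).mono fun θb h => key θb h)
    have h1 : Filter.Tendsto (fun θb : ℝ => (-θb)⁻¹) Filter.atBot (nhds 0) :=
      tendsto_inv_atTop_zero.comp Filter.tendsto_neg_atBot_atTop
    simpa using h1.const_mul C
  refine ⟨?_, part2⟩
  have hcomp : Filter.Tendsto (fun τ : ℝ => θ - τ) Filter.atTop Filter.atBot := by
    simpa [sub_eq_add_neg] using
      Filter.tendsto_atBot_add_const_left Filter.atTop θ Filter.tendsto_neg_atTop_atBot
  have := (part2.comp hcomp).div_const (Npair g g' θ).toReal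
  simpa using this

end
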